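/- arXiv:0904.3826 — 2 statements merged into one kernel-verified Lean document; each statement's English description precedes it below -/
import Mathlib

section
/- Let R₀ be the type-0 Rauzy map on permutations of {1,...,d}: R₀(π)(j) = π(j) if π(j) ≤ π(d), R₀(π)(j) = π(j)+1 if π(d) < π(j) < d, R₀(π)(j) = π(d)+1 if π(j) = d. Then R₀ restricts to a bijection of the set of irreducible permutations of {1,...,d} onto itself. The same holds for the type-1 Rauzy map R₁(π) = (R₀(π^{-1}))^{-1}. -/
/-- Irreducibility of a permutation of `{1, ..., d}`. -/
def IrredP {d : ℕ} (π : Equiv.Perm (Fin d)) : Prop :=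
  ∀ k : ℕ, 1 ≤ k → k < d →
    (⇑π '' {i : Fin d | (i : ℕ) < k}) ≠ {i : Fin d | (i : ℕ) < k}

/-- `σ` is the image of `π` by the type-0 Rauzy map. -/
def IsR0 {d : ℕ} (π σ : Equiv.Perm (Fin d)) : Prop :=
  ∀ l j : Fin d, (l : ℕ) = d - 1 →
    (σ j : ℕ) = if (π j : ℕ) ≤ (π l : ℕ) then (π j : ℕ)
      else if (π j : ℕ) < d - 1 then (π j : ℕ) + 1 else (π l : ℕ) + 1

namespace Stmt9Aux

lemma irred_inv {d : ℕ} {π : Equiv.Perm (Fin d)} (h : IrredP π) : IrredP π⁻¹ := by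
  intro k hk1 hk2 hEq
  apply h k hk1 hk2
  have h2 : ⇑π '' (⇑π⁻¹ '' {i : Fin d | (i : ℕ) < k}) = {i : Fin d | (i : ℕ) < k} := by
    ext y; simp
  rwa [hEq] at h2

lemma irred_last {d : ℕ} (hd : 2 ≤ d) {π : Equiv.Perm (Fin d)} (h : IrredP π)
    {l : Fin d} (hl : (l : ℕ) = d - 1) : (π l : ℕ) < d - 1 := by
  by_contra hc
  have hπl : (π l : ℕ) = d - 1 := by have := (π l).is_lt; omega
  apply h (d - 1) (by omega) (by omega)
  ext y
  simp only [Set.mem_image, Set.mem_setOf_eq]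
  constructor
  · rintro ⟨i, hi, rfl⟩
    have hne : (π i : ℕ) ≠ d - 1 := by
      intro he
      have h1 : π i = π l := Fin.ext (by omega)
      have h2 : i = l := π.injective h1
      have : (i : ℕ) = d - 1 := by rw [h2, hl]
      omega
    have := (π i).is_lt; omega
  · intro hy
    refine ⟨π⁻¹ y, ?_, by simp⟩
    have h1 : (y : ℕ) ≠ d - 1 := by omega
    have h2 : π⁻¹ y ≠ l := by
      intro he
      apply h1
      have h3 : π (π⁻¹ y) = y := by simp
      rw [he] at h3
      rw [← h3, hπl]
    have h3 : (π⁻¹ y : ℕ) ≠ d - 1 := fun hv => h2 (Fin.ext (by omega))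
    have := (π⁻¹ y).is_lt
    omega

lemma core {d m : ℕ} (hm : m + 1 < d) (π σ : Equiv.Perm (Fin d))
    {l : Fin d} (hl : (l : ℕ) = d - 1)
    (hlast : (π l : ℕ) = m)
    (hform : ∀ j, (σ j : ℕ) = if (π j : ℕ) ≤ m then (π j : ℕ)
      else if (π j : ℕ) < d - 1 then (π j : ℕ) + 1 else m + 1) :
    IrredP π ↔ IrredP σ := by
  have hσl : (σ l : ℕ) = m := by
    have h := hform l
    rw [hlast] at h
    simpa using h
  constructor
  · intro hπ k hk1 hk2 hEq
    rcases le_or_gt k (m + 1) with hk | hk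
    · apply hπ k hk1 hk2
      ext y
      simp only [Set.mem_image, Set.mem_setOf_eq]
      constructor
      · rintro ⟨i, hi, rfl⟩
        have hσi : (σ i : ℕ) < k := by
          have hmem : σ i ∈ {i : Fin d | (i : ℕ) < k} := by
            rw [← hEq]; exact ⟨i, hi, rfl⟩
          exact hmem
        have hf := hform i
        split_ifs at hf <;> omega
      · intro hy
        have hmem : y ∈ ⇑σ '' {i : Fin d | (i : ℕ) < k} := by rw [hEq]; exact hy
        obtain ⟨i, hi, hσi⟩ := hmem
        refine ⟨i, hi, ?_⟩
        have hσiv : (σ i : ℕ) = (y : ℕ) := congrArg Fin.val hσi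
        have hf := hform i
        have hyk : (y : ℕ) < k := hy
        exact Fin.ext (by split_ifs at hf <;> omega)
    · have hmem : (⟨m, by omega⟩ : Fin d) ∈ ⇑σ '' {i : Fin d | (i : ℕ) < k} := by
        rw [hEq]
        exact (show m < k by omega)
      obtain ⟨i, hi, hσi⟩ := hmem
      have hσiv : (σ i : ℕ) = m := by rw [hσi]
      have hil : i = l := σ.injective (Fin.ext (by omega))
      have hi' : (i : ℕ) < k := hi
      rw [hil, hl] at hi'
      omega
  · intro hσ k hk1 hk2 hEq
    rcases le_or_gt k (m + 1) with hk | hk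
    · apply hσ k hk1 hk2
      ext y
      simp only [Set.mem_image, Set.mem_setOf_eq]
      constructor
      · rintro ⟨i, hi, rfl⟩
        have hπi : (π i : ℕ) < k := by
          have hmem : π i ∈ {i : Fin d | (i : ℕ) < k} := by
            rw [← hEq]; exact ⟨i, hi, rfl⟩
          exact hmem
        have hf := hform i
        split_ifs at hf <;> omega
      · intro hy
        have hmem : y ∈ ⇑π '' {i : Fin d | (i : ℕ) < k} := by rw [hEq]; exact hy
        obtain ⟨i, hi, hπi⟩ := hmem
        refine ⟨i, hi, ?_⟩
        have hπiv : (π i : ℕ) = (y : ℕ) := congrArg Fin.val hπi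
        have hf := hform i
        have hyk : (y : ℕ) < k := hy
        exact Fin.ext (by split_ifs at hf <;> omega)
    · have hmem : (⟨m, by omega⟩ : Fin d) ∈ ⇑π '' {i : Fin d | (i : ℕ) < k} := by
        rw [hEq]
        exact (show m < k by omega)
      obtain ⟨i, hi, hπi⟩ := hmem
      have hπiv : (π i : ℕ) = m := by rw [hπi]
      have hil : i = l := π.injective (Fin.ext (by omega))
      have hi' : (i : ℕ) < k := hi
      rw [hil, hl] at hi'
      omega

lemma isR0_unique {d : ℕ} (hd : 1 ≤ d) {π σ σ' : Equiv.Perm (Fin d)}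
    (h : IsR0 π σ) (h' : IsR0 π σ') : σ = σ' := by
  apply Equiv.ext
  intro j
  have e1 := h ⟨d - 1, by omega⟩ j rfl
  have e2 := h' ⟨d - 1, by omega⟩ j rfl
  exact Fin.ext (e1.trans e2.symm)

lemma bijR0 {d : ℕ} (R0 : Equiv.Perm (Fin d) → Equiv.Perm (Fin d))
    (hR0 : ∀ π, IrredP π → IsR0 π (R0 π)) :
    Set.BijOn R0 {π | IrredP π} {π | IrredP π} := by
  rcases lt_or_ge d 2 with hd | hd
  · have hsub : ∀ a b : Equiv.Perm (Fin d), a = b := by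
      intro a b
      apply Equiv.ext
      intro x
      have h1 := (a x).is_lt
      have h2 := (b x).is_lt
      exact Fin.ext (by omega)
    refine ⟨fun π hπ => ?_, fun π _ π' _ _ => hsub π π', fun σ hσ => ⟨σ, hσ, hsub _ _⟩⟩
    have h := hsub (R0 π) π
    rw [Set.mem_setOf_eq, h]
    exact hπ
  · have hlv : d - 1 < d := by omega
    have hl : ((⟨d - 1, hlv⟩ : Fin d) : ℕ) = d - 1 := rfl
    set l : Fin d := ⟨d - 1, hlv⟩ with hldef
    have hmaps : ∀ π : Equiv.Perm (Fin d), IrredP π → IrredP (R0 π) := by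
      intro π hπ
      have hm : (π l : ℕ) + 1 < d := by
        have := irred_last hd hπ hl; omega
      exact (core hm π (R0 π) hl rfl (fun j => hR0 π hπ l j hl)).mp hπ
    have hinj : Set.InjOn R0 {π | IrredP π} := by
      intro π hπ π' hπ' hEq
      have h1 := hR0 π hπ
      have h2 := hR0 π' hπ'
      rw [hEq] at h1
      have hll : (π l : ℕ) = (π' l : ℕ) := by
        have e1 := h1 l l hl
        have e2 := h2 l l hl
        simp only [le_refl, if_true] at e1 e2
        omega
      apply Equiv.ext
      intro j
      have e1 := h1 l j hl
      have e2 := h2 l j hl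
      rw [← hll] at e2
      have b1 := (π j).is_lt
      have b2 := (π' j).is_lt
      exact Fin.ext (by split_ifs at e1 e2 <;> omega)
    refine ⟨hmaps, hinj, ?_⟩
    intro σ hσ
    have hσ' : IrredP σ := hσ
    have hm0 : (σ l : ℕ) < d - 1 := irred_last hd hσ' hl
    set m : ℕ := (σ l : ℕ) with hmdef
    have hm : m + 1 < d := by omega
    let f : Fin d → Fin d := fun y =>
      ⟨if (y : ℕ) ≤ m then (y : ℕ) else if (y : ℕ) = m + 1 then d - 1 else (y : ℕ) - 1,
        by split_ifs <;> omega⟩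
    have hfval : ∀ y : Fin d, (f y : ℕ) =
        if (y : ℕ) ≤ m then (y : ℕ) else if (y : ℕ) = m + 1 then d - 1 else (y : ℕ) - 1 :=
      fun _ => rfl
    have hfinj : Function.Injective f := by
      intro x y h
      have hv : (f x : ℕ) = (f y : ℕ) := congrArg Fin.val h
      rw [hfval, hfval] at hv
      have b1 := x.is_lt
      have b2 := y.is_lt
      exact Fin.ext (by split_ifs at hv <;> omega)
    set A : Equiv.Perm (Fin d) := Equiv.ofBijective f (Finite.injective_iff_bijective.mp hfinj)
      with hA
    set π : Equiv.Perm (Fin d) := σ.trans A with hπdef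
    have hπval : ∀ j, (π j : ℕ) =
        if (σ j : ℕ) ≤ m then (σ j : ℕ) else if (σ j : ℕ) = m + 1 then d - 1 else (σ j : ℕ) - 1 :=
      fun j => rfl
    have hπl : (π l : ℕ) = m := by
      rw [hπval l, ← hmdef]
      simp
    have hform : ∀ j, (σ j : ℕ) = if (π j : ℕ) ≤ m then (π j : ℕ)
        else if (π j : ℕ) < d - 1 then (π j : ℕ) + 1 else m + 1 := by
      intro j
      have hv := hπval j
      have b1 := (σ j).is_lt
      rw [hv]
      split_ifs <;> omega
    have hπirr : IrredP π := (core hm π σ hl hπl hform).mpr hσ'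
    refine ⟨π, hπirr, ?_⟩
    have hIs : IsR0 π σ := by
      intro l' j hl'
      have hll' : l' = l := Fin.ext (by rw [hl', hl])
      rw [hll', hπl]
      exact hform j
    exact isR0_unique (by omega) (hR0 π hπirr) hIs

end Stmt9Aux

theorem stmt9 (d : ℕ) (R0 R1 : Equiv.Perm (Fin d) → Equiv.Perm (Fin d))
    (hR0 : ∀ π, IrredP π → IsR0 π (R0 π))
    (hR1 : ∀ π, IrredP π → R1 π = (R0 π⁻¹)⁻¹) :
    Set.BijOn R0 {π | IrredP π} {π | IrredP π} ∧
    Set.BijOn R1 {π | IrredP π} {π | IrredP π} := by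
  have hbij0 : Set.BijOn R0 {π | IrredP π} {π | IrredP π} := Stmt9Aux.bijR0 R0 hR0
  refine ⟨hbij0, ?_, ?_, ?_⟩
  · intro π hπ
    have hπ' : IrredP π := hπ
    rw [Set.mem_setOf_eq, hR1 π hπ']
    exact Stmt9Aux.irred_inv (hbij0.mapsTo (Stmt9Aux.irred_inv hπ'))
  · intro π hπ π' hπ' h
    have h1 : IrredP π := hπ
    have h2 : IrredP π' := hπ'
    rw [hR1 π h1, hR1 π' h2] at h
    have h3 := inv_injective h
    have h4 := hbij0.injOn (Stmt9Aux.irred_inv h1) (Stmt9Aux.irred_inv h2) h3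
    exact inv_injective h4
  · intro σ hσ
    have hσ' : IrredP σ := hσ
    obtain ⟨τ, hτ, hτeq⟩ := hbij0.surjOn (Stmt9Aux.irred_inv hσ')
    have hτ' : IrredP τ := hτ
    refine ⟨τ⁻¹, Stmt9Aux.irred_inv hτ', ?_⟩
    rw [hR1 τ⁻¹ (Stmt9Aux.irred_inv hτ'), inv_inv, hτeq, inv_inv]
end

section
/- Let π be an irreducible permutation of {1,...,d} and ζ ∈ ℂ^d a suspension datum over π (Re ζ_j > 0 for all j; Im(ζ_1 + ... + ζ_i) > 0 and Im(ζ_{π^{-1}(1)} + ... + ζ_{π^{-1}(i)}) < 0 for all 1 ≤ i ≤ d-1). Suppose Re(ζ_d) > Re(ζ_{π^{-1}(d)}) (type 0). Define ζ' by ζ'_j = ζ_j for j ≠ d and ζ'_d = ζ_d - ζ_{π^{-1}(d)}. Then ζ' is a suspension datum over R₀(π), where R₀(π)(j) = π(j) if π(j) ≤ π(d), π(j)+1 if π(d) < π(j) < d, and π(d)+1 if π(j) = d. -/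
/-- `ζ` is a suspension datum over the permutation `π`. -/
def Susp {d : ℕ} (π : Equiv.Perm (Fin d)) (ζ : Fin d → ℂ) : Prop :=
  (∀ j, 0 < (ζ j).re) ∧
  (∀ i : ℕ, 1 ≤ i → i < d →
    0 < (∑ j ∈ Finset.univ.filter (fun j : Fin d => (j : ℕ) < i), ζ j).im) ∧
  (∀ i : ℕ, 1 ≤ i → i < d →
    (∑ j ∈ Finset.univ.filter (fun j : Fin d => (j : ℕ) < i), ζ (π.symm j)).im < 0)

private lemma sum_perm_reindex {d : ℕ} (τ : Equiv.Perm (Fin d)) (f : Fin d → ℂ) (i : ℕ) :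
    ∑ p ∈ Finset.univ.filter (fun p : Fin d => (p : ℕ) < i), f (τ.symm p)
      = ∑ j ∈ Finset.univ.filter (fun j : Fin d => ((τ j : ℕ)) < i), f j := by
  apply Finset.sum_nbij' (fun p => τ.symm p) (fun j => τ j) <;> simp

theorem stmt12 (d : ℕ) (π : Equiv.Perm (Fin d)) (hirr : IrredP π)
    (ζ ζ' : Fin d → ℂ) (hζ : Susp π ζ)
    (htype0 : ∀ l : Fin d, (l : ℕ) = d - 1 → (ζ (π.symm l)).re < (ζ l).re)
    (hζ'1 : ∀ j : Fin d, (j : ℕ) ≠ d - 1 → ζ' j = ζ j)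
    (hζ'2 : ∀ l : Fin d, (l : ℕ) = d - 1 → ζ' l = ζ l - ζ (π.symm l))
    (σ : Equiv.Perm (Fin d)) (hσ : IsR0 π σ) :
    Susp σ ζ' := by
  obtain ⟨hre, htop, hbot⟩ := hζ
  rcases Nat.eq_zero_or_pos d with hd0 | hd0
  · subst hd0
    exact ⟨fun j => j.elim0, fun i h1 h2 => by omega, fun i h1 h2 => by omega⟩
  obtain ⟨l, hlv⟩ : ∃ l : Fin d, (l : ℕ) = d - 1 := ⟨⟨d - 1, by omega⟩, rfl⟩
  rcases Nat.lt_or_ge d 2 with hd1 | hd2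
  · -- d = 1 : contradiction from htype0
    interval_cases d
    have h := htype0 l hlv
    have h2 : π.symm l = l := Subsingleton.elim _ _
    rw [h2] at h; exact absurd h (lt_irrefl _)
  -- main case d ≥ 2
  have hm : (π l : ℕ) < d - 1 := by
    by_contra h
    have hπl := (π l).isLt
    have hπll : π l = l := Fin.ext (by omega)
    apply hirr (d - 1) (by omega) (by omega)
    have hset : {i : Fin d | (i : ℕ) < d - 1} = ({l} : Set (Fin d))ᶜ := by
      ext i
      have hi := i.isLt
      simp only [Set.mem_setOf_eq, Set.mem_compl_iff, Set.mem_singleton_iff, Fin.ext_iff, hlv]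
      omega
    rw [hset, Set.image_compl_eq π.bijective, Set.image_singleton, hπll]
  have hσv : ∀ j : Fin d, (σ j : ℕ) = if (π j : ℕ) ≤ (π l : ℕ) then (π j : ℕ)
      else if (π j : ℕ) < d - 1 then (π j : ℕ) + 1 else (π l : ℕ) + 1 :=
    fun j => hσ l j hlv
  have hne : π.symm l ≠ l := by
    intro h
    have : π (π.symm l) = π l := by rw [h]
    rw [Equiv.apply_symm_apply] at this
    have h2 : (l : ℕ) = (π l : ℕ) := congrArg Fin.val this
    omega
  have hsymm_l_ne : ((π.symm l : ℕ)) ≠ d - 1 := by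
    intro h
    exact hne (Fin.ext (by rw [h, hlv]))
  -- bottom sums of π with reindex
  have hB : ∀ k : ℕ, 1 ≤ k → k < d →
      (∑ j ∈ Finset.univ.filter (fun j : Fin d => ((π j : ℕ)) < k), ζ j).im < 0 := by
    intro k hk1 hk2
    rw [← sum_perm_reindex π ζ k]
    exact hbot k hk1 hk2
  refine ⟨?_, ?_, ?_⟩
  · -- real parts
    intro j
    by_cases hj : (j : ℕ) = d - 1
    · have hjl : j = l := Fin.ext (by rw [hlv]; exact hj)
      rw [hjl, hζ'2 l hlv, Complex.sub_re]
      have := htype0 l hlv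
      linarith
    · rw [hζ'1 j hj]; exact hre j
  · -- top sums
    intro i h1 h2
    have hcongr : ∀ j ∈ Finset.univ.filter (fun j : Fin d => (j : ℕ) < i), ζ' j = ζ j := by
      intro j hj
      simp only [Finset.mem_filter, Finset.mem_univ, true_and] at hj
      exact hζ'1 j (by omega)
    rw [Finset.sum_congr rfl hcongr]
    exact htop i h1 h2
  · -- bottom sums
    intro i h1 h2
    rw [sum_perm_reindex σ ζ' i]
    rcases le_or_gt i ((π l : ℕ) + 1) with hi | hi
    · -- i ≤ π l + 1
      have hfilt : Finset.univ.filter (fun j : Fin d => ((σ j : ℕ)) < i)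
          = Finset.univ.filter (fun j : Fin d => ((π j : ℕ)) < i) := by
        apply Finset.filter_congr
        intro j _
        have h := hσv j
        have hj := (π j).isLt
        split_ifs at h <;> omega
      rw [hfilt]
      rcases Nat.lt_or_ge i ((π l : ℕ) + 1) with him | him
      · -- i ≤ π l
        have hcongr : ∀ j ∈ Finset.univ.filter (fun j : Fin d => ((π j : ℕ)) < i),
            ζ' j = ζ j := by
          intro j hj
          simp only [Finset.mem_filter, Finset.mem_univ, true_and] at hj
          apply hζ'1
          intro hjd
          have hjl : j = l := Fin.ext (by rw [hlv]; exact hjd)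
          rw [hjl] at hj
          omega
        rw [Finset.sum_congr rfl hcongr]
        exact hB i h1 h2
      · -- i = π l + 1
        have hieq : i = (π l : ℕ) + 1 := by omega
        subst hieq
        set s : Finset (Fin d) :=
          Finset.univ.filter (fun j : Fin d => ((π j : ℕ)) < (π l : ℕ) + 1) with hs
        have hls : l ∈ s := Finset.mem_filter.mpr ⟨Finset.mem_univ _, by omega⟩
        rw [← Finset.sum_erase_add s ζ' hls]
        have hcongr : ∀ j ∈ s.erase l, ζ' j = ζ j := by
          intro j hj
          apply hζ'1
          intro hjd
          exact (Finset.mem_erase.mp hj).1 (Fin.ext (by rw [hlv]; exact hjd))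
        rw [Finset.sum_congr rfl hcongr, hζ'2 l hlv]
        have hes : s.erase l = Finset.univ.filter (fun j : Fin d => ((π j : ℕ)) < (π l : ℕ)) := by
          ext j
          simp only [hs, Finset.mem_erase, Finset.mem_filter, Finset.mem_univ, true_and]
          constructor
          · rintro ⟨hjl, hlt⟩
            rcases Nat.lt_or_ge ((π j : ℕ)) ((π l : ℕ)) with h | h
            · exact h
            · exfalso
              exact hjl (π.injective (Fin.ext (by omega)))
          · intro h
            refine ⟨fun he => ?_, by omega⟩
            rw [he] at h; omega
        rw [hes]
        simp only [Complex.add_im, Complex.sub_im]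
        -- bound pieces
        have hBm : (∑ j ∈ Finset.univ.filter (fun j : Fin d => ((π j : ℕ)) < (π l : ℕ)), ζ j).im
            ≤ 0 := by
          rcases Nat.eq_zero_or_pos ((π l : ℕ)) with h0 | h0
          · rw [h0]
            simp
          · exact le_of_lt (hB _ h0 (by omega))
        have htopeq : (∑ j ∈ Finset.univ.filter (fun j : Fin d => (j : ℕ) < d - 1), ζ j) + ζ l
            = ∑ j, ζ j := by
          have hfe : Finset.univ.filter (fun j : Fin d => (j : ℕ) < d - 1)
              = Finset.univ.erase l := by
            ext j
            have hj := j.isLt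
            simp only [Finset.mem_filter, Finset.mem_univ, true_and, Finset.mem_erase, and_true,
              Fin.ext_iff, hlv]
            omega
          rw [hfe, Finset.sum_erase_add _ _ (Finset.mem_univ l)]
        have hboteq : (∑ j ∈ Finset.univ.filter (fun j : Fin d => ((π j : ℕ)) < d - 1), ζ j)
            + ζ (π.symm l) = ∑ j, ζ j := by
          have hfe : Finset.univ.filter (fun j : Fin d => ((π j : ℕ)) < d - 1)
              = Finset.univ.erase (π.symm l) := by
            ext j
            have hj := (π j).isLt
            simp only [Finset.mem_filter, Finset.mem_univ, true_and, Finset.mem_erase, and_true]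
            constructor
            · intro h he
              rw [he, Equiv.apply_symm_apply, hlv] at h
              omega
            · intro h
              rcases Nat.lt_or_ge ((π j : ℕ)) (d - 1) with h' | h'
              · exact h'
              · exfalso
                apply h
                have hjl : π j = l := Fin.ext (by rw [hlv]; omega)
                rw [← hjl, Equiv.symm_apply_apply]
          rw [hfe, Finset.sum_erase_add _ _ (Finset.mem_univ _)]
        have hkey : ζ l - ζ (π.symm l)
            = (∑ j ∈ Finset.univ.filter (fun j : Fin d => ((π j : ℕ)) < d - 1), ζ j)
              - (∑ j ∈ Finset.univ.filter (fun j : Fin d => (j : ℕ) < d - 1), ζ j) := by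
          linear_combination htopeq - hboteq
        have hkeyim := congrArg Complex.im hkey
        simp only [Complex.sub_im] at hkeyim
        have h3 := hB (d - 1) (by omega) (by omega)
        have h4 := htop (d - 1) (by omega) (by omega)
        linarith
    · -- i ≥ π l + 2
      have hfilt : Finset.univ.filter (fun j : Fin d => ((σ j : ℕ)) < i)
          = insert (π.symm l)
              (Finset.univ.filter (fun j : Fin d => ((π j : ℕ)) < i - 1)) := by
        ext j
        simp only [Finset.mem_filter, Finset.mem_univ, true_and, Finset.mem_insert]
        have h := hσv j
        have hj := (π j).isLt
        have hsymm : j = π.symm l ↔ (π j : ℕ) = d - 1 := by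
          constructor
          · intro h'
            rw [h', Equiv.apply_symm_apply, hlv]
          · intro h'
            have hjl : π j = l := Fin.ext (by rw [hlv]; exact h')
            rw [← hjl, Equiv.symm_apply_apply]
        rw [hsymm]
        split_ifs at h <;> omega
      have hnotmem : π.symm l ∉ Finset.univ.filter (fun j : Fin d => ((π j : ℕ)) < i - 1) := by
        simp only [Finset.mem_filter, Finset.mem_univ, true_and, Equiv.apply_symm_apply, hlv]
        omega
      rw [hfilt, Finset.sum_insert hnotmem, hζ'1 (π.symm l) hsymm_l_ne]
      have hls : l ∈ Finset.univ.filter (fun j : Fin d => ((π j : ℕ)) < i - 1) :=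
        Finset.mem_filter.mpr ⟨Finset.mem_univ _, by omega⟩
      rw [← Finset.sum_erase_add _ ζ' hls]
      have hcongr : ∀ j ∈ (Finset.univ.filter (fun j : Fin d => ((π j : ℕ)) < i - 1)).erase l,
          ζ' j = ζ j := by
        intro j hj
        apply hζ'1
        intro hjd
        exact (Finset.mem_erase.mp hj).1 (Fin.ext (by rw [hlv]; exact hjd))
      rw [Finset.sum_congr rfl hcongr, hζ'2 l hlv]
      have hsum := Finset.sum_erase_add
        (Finset.univ.filter (fun j : Fin d => ((π j : ℕ)) < i - 1)) ζ hls
      have hBi := hB (i - 1) (by omega) (by omega)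
      have heq : ζ (π.symm l)
          + ((∑ j ∈ (Finset.univ.filter (fun j : Fin d => ((π j : ℕ)) < i - 1)).erase l, ζ j)
            + (ζ l - ζ (π.symm l)))
          = ∑ j ∈ Finset.univ.filter (fun j : Fin d => ((π j : ℕ)) < i - 1), ζ j := by
        linear_combination hsum
      rw [heq]
      exact hBi
end
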